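/- Let (X,ρ) be a compact metric space and ε > 0. Put η = 1/r(ε/2, X), where r(ε/2, X) is the smallest cardinality of an (ε/2)-spanning subset of X. Then for every continuous map f : X → X, every x ∈ X, and all m, n ∈ ℕ, the correlation sum satisfies C^f_m(x,n,ε) ≥ η^m; consequently ĉ^f_m(x,ε) ≥ č^f_m(x,ε) ≥ η^m. -/

import Mathlib

open Filter Topology Set MeasureTheory

section Defs

variable {X : Type*} [MetricSpace X]

/-- Bowen's metric `ρ^f_m(y,z) = max_{0 ≤ i < m} ρ(f^i y, f^i z)`. -/
noncomputable def bowenDist (f : X → X) (m : ℕ) (y z : X) : ℝ :=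
  (((Finset.range m).sup fun i => nndist (f^[i] y) (f^[i] z)) : NNReal)

open scoped Classical in
/-- The correlation sum `C^f_m(x,n,ε)`. -/
noncomputable def corrSum (f : X → X) (m : ℕ) (x : X) (n : ℕ) (ε : ℝ) : ℝ :=
  (((Finset.range n ×ˢ Finset.range n).filter fun q =>
      bowenDist f m (f^[q.1] x) (f^[q.2] x) ≤ ε).card : ℝ) / (n : ℝ) ^ 2

/-- `ĉ^f_m(x,ε) = limsup_{n→∞} C^f_m(x,n,ε)`. -/
noncomputable def corrUpper (f : X → X) (m : ℕ) (x : X) (ε : ℝ) : ℝ :=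
  Filter.limsup (fun n : ℕ => corrSum f m x n ε) Filter.atTop

/-- `č^f_m(x,ε) = liminf_{n→∞} C^f_m(x,n,ε)`. -/
noncomputable def corrLower (f : X → X) (m : ℕ) (x : X) (ε : ℝ) : ℝ :=
  Filter.liminf (fun n : ℕ => corrSum f m x n ε) Filter.atTop

/-- The upper local correlation entropy `entr⁺(f,x) = lim_{ε→0⁺} limsup_m (−1/m) log č^f_m(x,ε)`;
the limit as `ε → 0⁺` exists by monotonicity in `ε`, and is expressed here as a `limsup`
along `𝓝[>] 0` (with values in `EReal`). -/
noncomputable def entrUpper (f : X → X) (x : X) : EReal :=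
  Filter.limsup (fun ε : ℝ =>
      Filter.limsup (fun m : ℕ => ((-(1 / (m : ℝ)) * Real.log (corrLower f m x ε) : ℝ) : EReal))
        Filter.atTop)
    (𝓝[>] (0 : ℝ))

/-- The lower local correlation entropy `entr⁻(f,x) = lim_{ε→0⁺} liminf_m (−1/m) log ĉ^f_m(x,ε)`. -/
noncomputable def entrLower (f : X → X) (x : X) : EReal :=
  Filter.limsup (fun ε : ℝ =>
      Filter.liminf (fun m : ℕ => ((-(1 / (m : ℝ)) * Real.log (corrUpper f m x ε) : ℝ) : EReal))
        Filter.atTop)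
    (𝓝[>] (0 : ℝ))

/-- `r_m(ε,K)`: the smallest cardinality of a subset of `K` which `(m,ε)`-spans `K`. -/
noncomputable def spanNumOn (f : X → X) (K : Set X) (m : ℕ) (ε : ℝ) : ℕ :=
  sInf {k : ℕ | ∃ A : Finset X, ↑A ⊆ K ∧ A.card = k ∧ ∀ y ∈ K, ∃ a ∈ A, bowenDist f m y a ≤ ε}

/-- Bowen's topological entropy of `f` on `K` (for `K = univ`, of `f` itself;
for closed invariant `K`, of the restriction of `f` to `K`). -/
noncomputable def topEntropyOn (f : X → X) (K : Set X) : EReal :=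
  Filter.limsup (fun ε : ℝ =>
      Filter.limsup (fun n : ℕ => (((1 / (n : ℝ)) * Real.log (spanNumOn f K n ε) : ℝ) : EReal))
        Filter.atTop)
    (𝓝[>] (0 : ℝ))

end Defs

/-- `r(ε,X)`: the smallest cardinality of an `ε`-spanning subset of `X`. -/
noncomputable def spanNum (X : Type*) [MetricSpace X] (ε : ℝ) : ℕ :=
  sInf {k : ℕ | ∃ A : Finset X, A.card = k ∧ ∀ y : X, ∃ a ∈ A, dist y a ≤ ε}

set_option maxHeartbeats 1000000 in
/-- For a compact metric space `X` and `ε > 0`, with `η = 1/r(ε/2,X)`: for every continuous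
`f : X → X`, `x ∈ X` and `m, n ∈ ℕ`, `C^f_m(x,n,ε) ≥ η^m`; consequently
`ĉ^f_m(x,ε) ≥ č^f_m(x,ε) ≥ η^m`. -/
theorem corrSum_ge_eta_pow {X : Type*} [MetricSpace X] [CompactSpace X] (ε : ℝ) (hε : 0 < ε)
    (η : ℝ) (hη : η = 1 / (spanNum X (ε / 2) : ℝ)) :
    ∀ f : X → X, Continuous f → ∀ (x : X) (m : ℕ), 0 < m →
      (∀ n : ℕ, 0 < n → η ^ m ≤ corrSum f m x n ε) ∧
      η ^ m ≤ corrLower f m x ε ∧ corrLower f m x ε ≤ corrUpper f m x ε := by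
  classical
  intro f hf x m hm
  letI : DecidableEq (Fin m → X) := Classical.decEq _
  -- `X` is nonempty
  have hε2 : (0:ℝ) < ε / 2 := by linarith
  -- the defining set of `spanNum X (ε/2)` is nonempty
  have hS : {k : ℕ | ∃ A : Finset X, A.card = k ∧ ∀ y : X, ∃ a ∈ A, dist y a ≤ ε / 2}.Nonempty := by
    obtain ⟨t, htf, hcov⟩ := (Metric.totallyBounded_iff.mp (isCompact_univ : IsCompact (Set.univ : Set X)).totallyBounded)
      (ε / 2) hε2
    refine ⟨htf.toFinset.card, htf.toFinset, rfl, fun y => ?_⟩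
    have hy : y ∈ ⋃ z ∈ t, Metric.ball z (ε / 2) := hcov (mem_univ y)
    simp only [mem_iUnion, Metric.mem_ball] at hy
    obtain ⟨a, ha, hya⟩ := hy
    exact ⟨a, htf.mem_toFinset.mpr ha, le_of_lt hya⟩
  obtain ⟨A, hAcard, hAspan⟩ := Nat.sInf_mem hS
  set r : ℕ := spanNum X (ε / 2) with hr
  have hAcard' : A.card = r := hAcard
  have hrpos : 0 < r := by
    rcases hAspan x with ⟨a, haA, -⟩
    have : 0 < A.card := Finset.card_pos.mpr ⟨a, haA⟩
    omega
  have hrR : (0:ℝ) < (r : ℝ) := by exact_mod_cast hrpos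
  choose near hnearA hneard using hAspan
  -- coding map
  set code : ℕ → Fin m → X := fun i j => near (f^[(j : ℕ) + i] x) with hcode
  -- same code ⇒ close in Bowen metric
  have key : ∀ i j : ℕ, code i = code j →
      bowenDist f m (f^[i] x) (f^[j] x) ≤ ε := by
    intro i j hij
    show (((Finset.range m).sup fun k => nndist (f^[k] (f^[i] x)) (f^[k] (f^[j] x))) : NNReal)
        ≤ ε
    rw [← Real.coe_toNNReal ε hε.le, NNReal.coe_le_coe]
    apply Finset.sup_le
    intro k hk
    rw [← NNReal.coe_le_coe, coe_nndist, Real.coe_toNNReal _ hε.le]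
    have hkm : k < m := Finset.mem_range.mp hk
    have h1 : f^[k] (f^[i] x) = f^[k + i] x := (Function.iterate_add_apply f k i x).symm
    have h2 : f^[k] (f^[j] x) = f^[k + j] x := (Function.iterate_add_apply f k j x).symm
    rw [h1, h2]
    have hcij : near (f^[k + i] x) = near (f^[k + j] x) := by
      have := congrFun hij (⟨k, hkm⟩ : Fin m)
      simpa [hcode] using this
    calc dist (f^[k + i] x) (f^[k + j] x)
        ≤ dist (f^[k + i] x) (near (f^[k + i] x)) + dist (near (f^[k + i] x)) (f^[k + j] x) :=
          dist_triangle _ _ _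
      _ ≤ ε / 2 + ε / 2 := by
          refine add_le_add (hneard _) ?_
          rw [hcij, dist_comm]
          exact hneard _
      _ = ε := by ring
  -- the main counting bound
  have main : ∀ n : ℕ, 0 < n → η ^ m ≤ corrSum f m x n ε := by
    intro n hn
    set s := Finset.range n with hs
    set P : Finset (Fin m → X) := Fintype.piFinset fun _ : Fin m => A with hP
    have hcodeP : ∀ i : ℕ, code i ∈ P := by
      intro i
      rw [hP, Fintype.mem_piFinset]
      intro j
      exact hnearA _
    have hPcard : P.card = r ^ m := by
      rw [hP, Fintype.card_piFinset]
      simp [hAcard']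
    set fib : (Fin m → X) → ℕ := fun c => ((s.filter fun i => code i = c)).card with hfib
    have hsum : n = ∑ c ∈ P, fib c := by
      have := Finset.card_eq_sum_card_fiberwise (f := code) (s := s) (t := P)
        (fun i _ => hcodeP i)
      simpa [hs] using this
    set pairs := (s ×ˢ s).filter fun q : ℕ × ℕ => code q.1 = code q.2 with hpairs
    have hpairsCard : pairs.card = ∑ c ∈ P, fib c ^ 2 := by
      have h1 : pairs.card = ∑ c ∈ P, ((pairs.filter fun q => code q.1 = c)).card :=
        Finset.card_eq_sum_card_fiberwise (f := fun q : ℕ × ℕ => code q.1)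
          (fun (q : ℕ × ℕ) hq => hcodeP q.1)
      rw [h1]
      refine Finset.sum_congr rfl fun c _ => ?_
      have h2 : (pairs.filter fun q => code q.1 = c) =
          (s.filter fun i => code i = c) ×ˢ (s.filter fun i => code i = c) := by
        ext q
        simp only [hpairs, Finset.mem_filter, Finset.mem_product]
        constructor
        · rintro ⟨⟨⟨h1, h2⟩, h3⟩, h4⟩
          exact ⟨⟨h1, h4⟩, h2, h3 ▸ h4⟩
        · rintro ⟨⟨h1, h2⟩, h3, h4⟩
          exact ⟨⟨⟨h1, h3⟩, h2.trans h4.symm⟩, h2⟩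
      rw [h2, Finset.card_product, sq]
    -- Cauchy–Schwarz
    have hCS : (n : ℝ) ^ 2 ≤ (r : ℝ) ^ m * (pairs.card : ℝ) := by
      have := sq_sum_le_card_mul_sum_sq (s := P) (f := fun c => (fib c : ℝ))
      have h1 : ((n : ℝ)) = ∑ c ∈ P, (fib c : ℝ) := by
        rw [hsum]; push_cast; ring
      have h2 : ((pairs.card : ℝ)) = ∑ c ∈ P, ((fib c : ℝ)) ^ 2 := by
        rw [hpairsCard]; push_cast; ring
      rw [h1, h2]
      calc (∑ c ∈ P, (fib c : ℝ)) ^ 2 ≤ (P.card : ℝ) * ∑ c ∈ P, (fib c : ℝ) ^ 2 := this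
        _ = (r : ℝ) ^ m * ∑ c ∈ P, (fib c : ℝ) ^ 2 := by rw [hPcard]; push_cast; ring
    -- pairs with equal codes are ε-close pairs
    have hsubset : pairs ⊆ (s ×ˢ s).filter fun q : ℕ × ℕ =>
        bowenDist f m (f^[q.1] x) (f^[q.2] x) ≤ ε := by
      rw [hpairs]
      exact Finset.monotone_filter_right _ fun q _ hq => key q.1 q.2 hq
    have hcardle : (pairs.card : ℝ) ≤
        (((s ×ˢ s).filter fun q : ℕ × ℕ =>
          bowenDist f m (f^[q.1] x) (f^[q.2] x) ≤ ε).card : ℝ) := by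
      exact_mod_cast Finset.card_le_card hsubset
    have hnR : (0:ℝ) < (n : ℝ) ^ 2 := by positivity
    rw [corrSum, le_div_iff₀ hnR]
    have hηm : η ^ m = ((r : ℝ) ^ m)⁻¹ := by
      rw [hη, one_div, inv_pow]
    rw [hηm, inv_mul_le_iff₀ (by positivity)]
    exact hCS.trans (mul_le_mul_of_nonneg_left hcardle (by positivity))
  have hnn : ∀ n : ℕ, 0 ≤ corrSum f m x n ε := by
    intro n
    rw [corrSum]
    positivity
  have hbdd : ∀ n : ℕ, corrSum f m x n ε ≤ 1 := by
    intro n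
    rcases Nat.eq_zero_or_pos n with rfl | hn
    · simp [corrSum]
    · rw [corrSum, div_le_one (by positivity)]
      calc ((((Finset.range n ×ˢ Finset.range n).filter fun q =>
            bowenDist f m (f^[q.1] x) (f^[q.2] x) ≤ ε).card : ℝ))
          ≤ ((Finset.range n ×ˢ Finset.range n).card : ℝ) := by
            exact_mod_cast Finset.card_le_card (Finset.filter_subset _ _)
        _ = (n : ℝ) ^ 2 := by simp [sq]
  refine ⟨main, ?_, ?_⟩
  · apply Filter.le_liminf_of_le
    · exact (Filter.isBoundedUnder_of ⟨1, hbdd⟩).isCoboundedUnder_ge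
    · filter_upwards [Filter.eventually_gt_atTop 0] with n hn using main n hn
  · exact Filter.liminf_le_limsup (Filter.isBoundedUnder_of ⟨1, hbdd⟩)
      (Filter.isBoundedUnder_of ⟨0, hnn⟩)
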